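/- For any code C over an alphabet of size r and any positive integer k, K(C^k) ≤ K(C)^k, where K(C) = Σ_{x∈C} r^{-len(x)} is the Kraft sum. -/

import Mathlib

open Finset Pointwise

instance {A : Type*} [DecidableEq A] : DecidableEq (FreeMonoid A) :=
  inferInstanceAs (DecidableEq (List A))

/-- A code `C` is uniquely decipherable: the concatenation (product) map is
injective on finite sequences of words from `C`. -/
def IsUD {A : Type*} (C : Finset (FreeMonoid A)) : Prop :=
  ∀ l₁ l₂ : List (FreeMonoid A), (∀ w ∈ l₁, w ∈ C) → (∀ w ∈ l₂, w ∈ C) →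
    l₁.prod = l₂.prod → l₁ = l₂

/-- The Kraft sum of a code over an alphabet of size `r`. -/
noncomputable def Kraft {A : Type*} (r : ℕ) (C : Finset (FreeMonoid A)) : ℝ :=
  ∑ x ∈ C, (r : ℝ) ^ (-(x.length : ℤ))

/-- `D` is finer than `C` (refines `C`): every word of `C` is the concatenation
of a nonempty finite sequence of words from `D`. -/
def Refines {A : Type*} (C D : Finset (FreeMonoid A)) : Prop :=
  ∀ w ∈ C, ∃ l : List (FreeMonoid A), l ≠ [] ∧ (∀ v ∈ l, v ∈ D) ∧ l.prod = w


lemma my_sum_image_le {α β : Type*} [DecidableEq α] [DecidableEq β] (s : Finset α) (g : α → β)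
    (f : β → ℝ) (hf : ∀ b, 0 ≤ f b) :
    ∑ x ∈ s.image g, f x ≤ ∑ i ∈ s, f (g i) := by
  induction s using Finset.induction with
  | empty => simp
  | insert a t ha ih =>
    rw [Finset.sum_insert ha, Finset.image_insert]
    by_cases h : g a ∈ t.image g
    · rw [Finset.insert_eq_self.mpr h]
      linarith [hf (g a)]
    · rw [Finset.sum_insert h]
      linarith

lemma kraft_nonneg {A : Type*} [DecidableEq A] (r : ℕ) (C : Finset (FreeMonoid A)) :
    0 ≤ Kraft r C :=
  Finset.sum_nonneg fun _ _ => zpow_nonneg (by positivity) _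

lemma kraft_mul_le {A : Type*} [DecidableEq A] {r : ℕ} (hr : 1 ≤ r)
    (C D : Finset (FreeMonoid A)) :
    Kraft r (C * D) ≤ Kraft r C * Kraft r D := by
  have hr0 : (r : ℝ) ≠ 0 := by positivity
  have himg : C * D = (C ×ˢ D).image (fun p => p.1 * p.2) := by
    ext x
    simp [Finset.mem_mul, Finset.mem_image, Finset.mem_product]
    tauto
  rw [Kraft, himg, Kraft, Kraft, Finset.sum_mul_sum]
  calc ∑ x ∈ (C ×ˢ D).image (fun p => p.1 * p.2), (r : ℝ) ^ (-(x.length : ℤ))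
      ≤ ∑ p ∈ C ×ˢ D, (r : ℝ) ^ (-((p.1 * p.2).length : ℤ)) := by
        exact my_sum_image_le _ _ _ fun b => by positivity
    _ = ∑ i ∈ C, ∑ j ∈ D, (r : ℝ) ^ (-(i.length : ℤ)) * (r : ℝ) ^ (-(j.length : ℤ)) := by
        rw [Finset.sum_product]
        refine Finset.sum_congr rfl fun i _ => Finset.sum_congr rfl fun j _ => ?_
        rw [← zpow_add₀ hr0]
        congr 1
        have : (i * j).length = i.length + j.length := FreeMonoid.length_mul i j
        rw [this]
        push_cast
        ring

theorem stmt_2 {A : Type*} [Fintype A] [DecidableEq A]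
    (hr : 1 ≤ Fintype.card A)
    (C : Finset (FreeMonoid A)) (hC : (1 : FreeMonoid A) ∉ C)
    (k : ℕ) (hk : 1 ≤ k) :
    Kraft (Fintype.card A) (C ^ k) ≤ (Kraft (Fintype.card A) C) ^ k := by
  induction k with
  | zero => omega
  | succ n ih =>
    rcases Nat.eq_or_lt_of_le hk with h | h
    · simp [← h, pow_one]
    · have hn : 1 ≤ n := by omega
      have h1 := ih hn
      have h2 := kraft_mul_le hr (C ^ n) C
      rw [pow_succ, pow_succ]
      calc Kraft (Fintype.card A) (C ^ n * C)
          ≤ Kraft (Fintype.card A) (C ^ n) * Kraft (Fintype.card A) C := h2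
        _ ≤ Kraft (Fintype.card A) C ^ n * Kraft (Fintype.card A) C :=
            mul_le_mul_of_nonneg_right h1 (kraft_nonneg _ _)
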